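/- Let σ⁰ = (n²π²)_{n≥1}, and let σ = σ⁰ + σ̃ and ρ = σ⁰ + ρ̃ be two sequences of complex numbers with σ̃, ρ̃ ∈ ℓ^{−1,∞}. Suppose c > 0 is such that |ρ_m − σ_n| ≥ c^{−1}|m² − n²| for all m ≠ n (m, n ≥ 1). Then for every −1 ≤ s ≤ 0 and 1 < p < ∞ and every x ∈ ℓ^{s,p}: for each n ≥ 1 the series (Bx)_n = ∑_{m≥1, m≠n} x_m/(ρ_m − σ_n) converges absolutely, and ‖Bx‖_{s+1,p} ≤ π^{−2}·(‖A‖ + 4c‖ρ̃‖_{−1,∞} + 4c‖σ̃‖_{−1,∞})·‖x‖_{s,p}, where ‖A‖ denotes the operator norm of A : ℓ^{s,p} → ℓ^{s+1,p}, (Ax)_n = ∑_{m≠n} x_m/(m² − n²). -/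

import Mathlib

/-- The weighted `ℓ^{s,p}` norm of a complex sequence (indexed by `m ≥ 1`):
`‖x‖_{s,p} = (∑_{m ≥ 1} m^{sp} |x_m|^p)^{1/p}`. -/
noncomputable def wnorm (s p : ℝ) (x : ℕ → ℂ) : ℝ :=
  (∑' m : {m : ℕ // 1 ≤ m}, (m.1 : ℝ) ^ (s * p) * ‖x m.1‖ ^ p) ^ (1 / p)

/-- Membership in `ℓ^{s,p}`: summability of `m^{sp} |x_m|^p` over `m ≥ 1`. -/
def MemW (s p : ℝ) (x : ℕ → ℂ) : Prop :=
  Summable fun m : {m : ℕ // 1 ≤ m} => (m.1 : ℝ) ^ (s * p) * ‖x m.1‖ ^ p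

/-- The operator `A`, `(Ax)_n = ∑_{m ≥ 1, m ≠ n} x_m / (m² − n²)`. -/
noncomputable def Aop (x : ℕ → ℂ) (n : ℕ) : ℂ :=
  ∑' m : {m : ℕ // 1 ≤ m ∧ m ≠ n}, x m.1 / ((m.1 : ℂ) ^ 2 - (n : ℂ) ^ 2)
open MeasureTheory ENNReal

private lemma tsum_Lp_add {α : Type} [Countable α] {p : ℝ} (hp : 1 ≤ p) (F G : α → ℝ≥0∞) :
    (∑' a, (F a + G a) ^ p) ^ (1 / p) ≤ (∑' a, F a ^ p) ^ (1 / p) + (∑' a, G a ^ p) ^ (1 / p) := by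
  letI : MeasurableSpace α := ⊤
  haveI : MeasurableSingletonClass α := ⟨fun _ => trivial⟩
  rw [← lintegral_count, ← lintegral_count, ← lintegral_count]
  exact ENNReal.lintegral_Lp_add_le measurable_from_top.aemeasurable
    measurable_from_top.aemeasurable hp

private lemma tsum_holder {α : Type} [Countable α] {p q : ℝ} (hpq : p.HolderConjugate q)
    (F G : α → ℝ≥0∞) :
    ∑' a, F a * G a ≤ (∑' a, F a ^ p) ^ (1 / p) * (∑' a, G a ^ q) ^ (1 / q) := by
  letI : MeasurableSpace α := ⊤
  haveI : MeasurableSingletonClass α := ⟨fun _ => trivial⟩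
  rw [← lintegral_count, ← lintegral_count, ← lintegral_count]
  exact ENNReal.lintegral_mul_le_Lp_mul_Lq _ hpq measurable_from_top.aemeasurable
    measurable_from_top.aemeasurable

private lemma dist_cast_abs (m n : ℕ) : ((Nat.dist m n : ℕ) : ℝ) = |(m : ℝ) - n| := by
  rcases le_total m n with h | h
  · rw [Nat.dist_eq_sub_of_le h, abs_sub_comm,
      abs_of_nonneg (sub_nonneg.2 (by exact_mod_cast h))]
    push_cast [h]; ring
  · rw [Nat.dist_eq_sub_of_le_right h,
      abs_of_nonneg (sub_nonneg.2 (by exact_mod_cast h))]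
    push_cast [h]; ring

/-- row sums over `m ≠ n` of a function of `|m-n|` are at most twice the full sum. -/
private lemma row_le (n : ℕ) (ψ : ℕ → ℝ≥0∞) :
    ∑' m : {m : ℕ // 1 ≤ m ∧ m ≠ n}, ψ (Nat.dist m.1 n) ≤ 2 * ∑' k : ℕ, ψ k := by
  have hinj : Function.Injective
      (fun m : {m : ℕ // 1 ≤ m ∧ m ≠ n} => ((Nat.dist m.1 n, decide (m.1 < n)) : ℕ × Bool)) := by
    intro a b hab
    simp only [Prod.mk.injEq, decide_eq_decide] at hab
    obtain ⟨h1, h2⟩ := hab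
    unfold Nat.dist at h1
    exact Subtype.ext (by omega)
  calc ∑' m : {m : ℕ // 1 ≤ m ∧ m ≠ n}, ψ (Nat.dist m.1 n)
      = ∑' m : {m : ℕ // 1 ≤ m ∧ m ≠ n},
        (fun kb : ℕ × Bool => ψ kb.1) ((Nat.dist m.1 n, decide (m.1 < n))) := rfl
    _ ≤ ∑' kb : ℕ × Bool, (fun kb : ℕ × Bool => ψ kb.1) kb :=
        ENNReal.tsum_comp_le_tsum_of_injective hinj _
    _ = ∑' k : ℕ, ∑' _ : Bool, ψ k := ENNReal.tsum_prod (f := fun k (_ : Bool) => ψ k)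
    _ = 2 * ∑' k : ℕ, ψ k := by
        simp [tsum_bool, two_mul, ENNReal.tsum_add]

private lemma rowsum4 (n : ℕ) :
    ∑' m : {m : ℕ // 1 ≤ m ∧ m ≠ n}, ENNReal.ofReal (1 / ((m.1 : ℝ) - n) ^ 2) ≤ 4 := by
  have key : ∀ m : {m : ℕ // 1 ≤ m ∧ m ≠ n},
      ENNReal.ofReal (1 / ((m.1 : ℝ) - n) ^ 2)
        = (fun k : ℕ => ENNReal.ofReal (1 / (k : ℝ) ^ 2)) (Nat.dist m.1 n) := by
    intro m
    simp only
    rw [dist_cast_abs, sq_abs]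
  calc ∑' m : {m : ℕ // 1 ≤ m ∧ m ≠ n}, ENNReal.ofReal (1 / ((m.1 : ℝ) - n) ^ 2)
      = ∑' m : {m : ℕ // 1 ≤ m ∧ m ≠ n},
          (fun k : ℕ => ENNReal.ofReal (1 / (k : ℝ) ^ 2)) (Nat.dist m.1 n) := by
        exact tsum_congr key
    _ ≤ 2 * ∑' k : ℕ, ENNReal.ofReal (1 / (k : ℝ) ^ 2) := row_le n _
    _ ≤ 2 * 2 := by
        gcongr
        rw [← ENNReal.ofReal_tsum_of_nonneg (fun k => by positivity) hasSum_zeta_two.summable,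
          hasSum_zeta_two.tsum_eq]
        calc ENNReal.ofReal (Real.pi ^ 2 / 6) ≤ ENNReal.ofReal 2 := by
              apply ENNReal.ofReal_le_ofReal
              nlinarith [Real.pi_lt_d2, Real.pi_pos]
          _ = 2 := by norm_num
    _ = 4 := by norm_num

private lemma rowsumq (n : ℕ) {q : ℝ} (hq : 1 < q) :
    ∑' m : {m : ℕ // 1 ≤ m ∧ m ≠ n}, ENNReal.ofReal ((1 / |(m.1 : ℝ) - n|) ^ q) ≠ ∞ := by
  have key : ∀ m : {m : ℕ // 1 ≤ m ∧ m ≠ n},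
      ENNReal.ofReal ((1 / |(m.1 : ℝ) - n|) ^ q)
        = (fun k : ℕ => ENNReal.ofReal ((1 / (k : ℝ)) ^ q)) (Nat.dist m.1 n) := by
    intro m; simp only; rw [dist_cast_abs]
  have hsum : Summable fun k : ℕ => (1 / (k : ℝ)) ^ q := by
    have := Real.summable_nat_rpow_inv.2 hq
    refine this.congr fun k => ?_
    rw [one_div, Real.inv_rpow (Nat.cast_nonneg k)]
  apply ne_top_of_le_ne_top (b := 2 * ∑' k : ℕ, ENNReal.ofReal ((1 / (k : ℝ)) ^ q))
  · apply ENNReal.mul_ne_top (by norm_num)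
    rw [← ENNReal.ofReal_tsum_of_nonneg (fun k => by positivity) hsum]
    exact ENNReal.ofReal_ne_top
  · rw [tsum_congr key]; exact row_le n _

private def swapEquiv :
    (Σ n : {n : ℕ // 1 ≤ n}, {m : ℕ // 1 ≤ m ∧ m ≠ n.1})
      ≃ (Σ n : {n : ℕ // 1 ≤ n}, {m : ℕ // 1 ≤ m ∧ m ≠ n.1}) where
  toFun z := ⟨⟨z.2.1, z.2.2.1⟩, ⟨z.1.1, z.1.2, fun h => z.2.2.2 h.symm⟩⟩
  invFun z := ⟨⟨z.2.1, z.2.2.1⟩, ⟨z.1.1, z.1.2, fun h => z.2.2.2 h.symm⟩⟩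
  left_inv := by rintro ⟨⟨n, hn⟩, ⟨m, hm⟩⟩; rfl
  right_inv := by rintro ⟨⟨n, hn⟩, ⟨m, hm⟩⟩; rfl

private lemma tsum_swap (h : ℕ → ℕ → ℝ≥0∞) :
    ∑' (n : {n : ℕ // 1 ≤ n}) (m : {m : ℕ // 1 ≤ m ∧ m ≠ n.1}), h n.1 m.1
      = ∑' (m : {n : ℕ // 1 ≤ n}) (n : {k : ℕ // 1 ≤ k ∧ k ≠ m.1}), h n.1 m.1 := by
  rw [← ENNReal.tsum_sigma (f := fun (n : {n : ℕ // 1 ≤ n}) (m : {m : ℕ // 1 ≤ m ∧ m ≠ n.1}) => h n.1 m.1),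
    ← ENNReal.tsum_sigma (f := fun (m : {n : ℕ // 1 ≤ n}) (n : {k : ℕ // 1 ≤ k ∧ k ≠ m.1}) => h n.1 m.1)]
  exact (Equiv.tsum_eq swapEquiv (fun w => h w.1.1 w.2.1)).symm

private lemma schur {p q : ℝ} (hpq : p.HolderConjugate q) (u : ℕ → ℝ≥0∞) :
    (∑' n : {n : ℕ // 1 ≤ n}, (∑' m : {m : ℕ // 1 ≤ m ∧ m ≠ n.1},
        ENNReal.ofReal (1 / ((m.1 : ℝ) - n.1) ^ 2) * u m.1) ^ p) ^ (1 / p)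
      ≤ 4 * (∑' m : {m : ℕ // 1 ≤ m}, (u m.1) ^ p) ^ (1 / p) := by
  set g : ℕ → ℕ → ℝ≥0∞ := fun n m => ENNReal.ofReal (1 / ((m : ℝ) - n) ^ 2) with hg
  have hp0 : (0 : ℝ) < p := hpq.pos
  have hq0 : (0 : ℝ) < q := hpq.symm.pos
  have hgsym : ∀ n m : ℕ, g n m = g m n := by
    intro n m; simp only [hg]; rw [← neg_sub ((m : ℝ)) (n : ℝ), neg_sq]
  have hgne : ∀ {n m : ℕ}, m ≠ n → g n m ≠ 0 := by
    intro n m hmn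
    simp only [hg, ne_eq, ENNReal.ofReal_eq_zero, not_le]
    have : ((m : ℝ) - n) ≠ 0 := sub_ne_zero.2 (by exact_mod_cast hmn)
    positivity
  have hgtop : ∀ n m : ℕ, g n m ≠ ∞ := fun n m => ENNReal.ofReal_ne_top
  have hrow : ∀ n : ℕ, ∑' m : {m : ℕ // 1 ≤ m ∧ m ≠ n}, g n m.1 ≤ 4 := fun n => rowsum4 n
  -- Step 1: per-row Hölder
  have step1 : ∀ n : {n : ℕ // 1 ≤ n},
      (∑' m : {m : ℕ // 1 ≤ m ∧ m ≠ n.1}, g n.1 m.1 * u m.1) ^ p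
        ≤ (4 : ℝ≥0∞) ^ (p / q) * ∑' m : {m : ℕ // 1 ≤ m ∧ m ≠ n.1}, g n.1 m.1 * (u m.1) ^ p := by
    intro n
    have hdec : ∀ m : {m : ℕ // 1 ≤ m ∧ m ≠ n.1},
        g n.1 m.1 * u m.1 = (g n.1 m.1 ^ (1 / q)) * ((g n.1 m.1 ^ (1 / p)) * u m.1) := by
      intro m
      rw [← mul_assoc, ← ENNReal.rpow_add _ _ (hgne m.2.2) (hgtop _ _)]
      rw [one_div, one_div, add_comm, hpq.inv_add_inv_eq_one, ENNReal.rpow_one]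
    have hhold := tsum_holder hpq.symm
      (fun m : {m : ℕ // 1 ≤ m ∧ m ≠ n.1} => g n.1 m.1 ^ (1 / q))
      (fun m : {m : ℕ // 1 ≤ m ∧ m ≠ n.1} => (g n.1 m.1 ^ (1 / p)) * u m.1)
    rw [← tsum_congr hdec] at hhold
    have hFq : ∀ m : {m : ℕ // 1 ≤ m ∧ m ≠ n.1}, (g n.1 m.1 ^ (1 / q)) ^ q = g n.1 m.1 := by
      intro m
      rw [← ENNReal.rpow_mul, one_div, inv_mul_cancel₀ hq0.ne', ENNReal.rpow_one]
    have hGp : ∀ m : {m : ℕ // 1 ≤ m ∧ m ≠ n.1},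
        ((g n.1 m.1 ^ (1 / p)) * u m.1) ^ p = g n.1 m.1 * (u m.1) ^ p := by
      intro m
      rw [ENNReal.mul_rpow_of_nonneg _ _ hp0.le, ← ENNReal.rpow_mul, one_div,
        inv_mul_cancel₀ hp0.ne', ENNReal.rpow_one]
    rw [tsum_congr hFq, tsum_congr hGp] at hhold
    have h1 : (∑' m : {m : ℕ // 1 ≤ m ∧ m ≠ n.1}, g n.1 m.1 * u m.1)
        ≤ (4 : ℝ≥0∞) ^ (1 / q) *
          (∑' m : {m : ℕ // 1 ≤ m ∧ m ≠ n.1}, g n.1 m.1 * (u m.1) ^ p) ^ (1 / p) := by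
      refine hhold.trans ?_
      gcongr
      exact hrow n.1
    calc (∑' m : {m : ℕ // 1 ≤ m ∧ m ≠ n.1}, g n.1 m.1 * u m.1) ^ p
        ≤ ((4 : ℝ≥0∞) ^ (1 / q) *
          (∑' m : {m : ℕ // 1 ≤ m ∧ m ≠ n.1}, g n.1 m.1 * (u m.1) ^ p) ^ (1 / p)) ^ p :=
          ENNReal.rpow_le_rpow h1 hp0.le
      _ = (4 : ℝ≥0∞) ^ (p / q) * ∑' m : {m : ℕ // 1 ≤ m ∧ m ≠ n.1}, g n.1 m.1 * (u m.1) ^ p := by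
          have e1 : (1 / q) * p = p / q := by ring
          have e2 : (1 / p) * p = 1 := by field_simp
          rw [ENNReal.mul_rpow_of_nonneg _ _ hp0.le, ← ENNReal.rpow_mul, ← ENNReal.rpow_mul,
            e1, e2, ENNReal.rpow_one]
  -- Step 2: sum over n and swap
  have step2 : ∑' (n : {n : ℕ // 1 ≤ n}) (m : {m : ℕ // 1 ≤ m ∧ m ≠ n.1}),
      g n.1 m.1 * (u m.1) ^ p ≤ 4 * ∑' m : {m : ℕ // 1 ≤ m}, (u m.1) ^ p := by
    rw [tsum_swap (fun n m => g n m * (u m) ^ p)]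
    calc ∑' (m : {n : ℕ // 1 ≤ n}) (n : {k : ℕ // 1 ≤ k ∧ k ≠ m.1}), g n.1 m.1 * (u m.1) ^ p
        = ∑' (m : {n : ℕ // 1 ≤ n}), (∑' (n : {k : ℕ // 1 ≤ k ∧ k ≠ m.1}), g n.1 m.1) * (u m.1) ^ p := by
          refine tsum_congr fun m => ?_
          rw [ENNReal.tsum_mul_right]
      _ ≤ ∑' (m : {n : ℕ // 1 ≤ n}), 4 * (u m.1) ^ p := by
          gcongr with m
          calc ∑' (n : {k : ℕ // 1 ≤ k ∧ k ≠ m.1}), g n.1 m.1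
              = ∑' (n : {k : ℕ // 1 ≤ k ∧ k ≠ m.1}), g m.1 n.1 := by
                exact tsum_congr fun k => hgsym k.1 m.1
            _ ≤ 4 := hrow m.1
      _ = 4 * ∑' m : {m : ℕ // 1 ≤ m}, (u m.1) ^ p := ENNReal.tsum_mul_left
  -- combine
  calc (∑' n : {n : ℕ // 1 ≤ n}, (∑' m : {m : ℕ // 1 ≤ m ∧ m ≠ n.1}, g n.1 m.1 * u m.1) ^ p) ^ (1 / p)
      ≤ ((4 : ℝ≥0∞) ^ (p / q) * (4 * ∑' m : {m : ℕ // 1 ≤ m}, (u m.1) ^ p)) ^ (1 / p) := by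
        apply ENNReal.rpow_le_rpow _ (by positivity)
        calc ∑' n : {n : ℕ // 1 ≤ n}, (∑' m : {m : ℕ // 1 ≤ m ∧ m ≠ n.1}, g n.1 m.1 * u m.1) ^ p
            ≤ ∑' n : {n : ℕ // 1 ≤ n}, (4 : ℝ≥0∞) ^ (p / q)
              * ∑' m : {m : ℕ // 1 ≤ m ∧ m ≠ n.1}, g n.1 m.1 * (u m.1) ^ p :=
              Summable.tsum_le_tsum step1 ENNReal.summable ENNReal.summable
          _ = (4 : ℝ≥0∞) ^ (p / q) * ∑' (n : {n : ℕ // 1 ≤ n}) (m : {m : ℕ // 1 ≤ m ∧ m ≠ n.1}),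
              g n.1 m.1 * (u m.1) ^ p := ENNReal.tsum_mul_left
          _ ≤ (4 : ℝ≥0∞) ^ (p / q) * (4 * ∑' m : {m : ℕ // 1 ≤ m}, (u m.1) ^ p) :=
              mul_le_mul_right step2 _
    _ = 4 * (∑' m : {m : ℕ // 1 ≤ m}, (u m.1) ^ p) ^ (1 / p) := by
        rw [← mul_assoc, ENNReal.mul_rpow_of_nonneg _ _ (by positivity)]
        have h4 : (4 : ℝ≥0∞) ^ (p / q) * 4 = (4 : ℝ≥0∞) ^ (p / q + 1) := by
          rw [ENNReal.rpow_add _ _ (by norm_num) (by norm_num), ENNReal.rpow_one]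
        have hexp : (p / q + 1) * (1 / p) = 1 := by
          field_simp
          linarith [hpq.inv_add_inv_eq_one, hpq.mul_eq_add]
        rw [h4, ← ENNReal.rpow_mul, hexp, ENNReal.rpow_one]

private lemma ker_ineq {s : ℝ} (hs : -1 ≤ s) (hs' : s ≤ 0) {A B Mρ Mσ : ℝ}
    (hA : 1 ≤ A) (hB : 1 ≤ B) (hMρ0 : 0 ≤ Mρ) (hMσ0 : 0 ≤ Mσ) :
    B ^ (s + 1) * (Mρ * A + Mσ * B) ≤ (Mρ + Mσ) * (A ^ s * (A + B) ^ 2) := by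
  have hA0 : (0 : ℝ) < A := lt_of_lt_of_le one_pos hA
  have hB0 : (0 : ℝ) < B := lt_of_lt_of_le one_pos hB
  rcases le_total A B with h | h
  · have h2 : B ^ s ≤ A ^ s := Real.rpow_le_rpow_of_nonpos hA0 h hs'
    have hBs : (0 : ℝ) < B ^ s := Real.rpow_pos_of_pos hB0 s
    calc B ^ (s + 1) * (Mρ * A + Mσ * B) = B ^ s * (B * (Mρ * A + Mσ * B)) := by
          rw [Real.rpow_add_one hB0.ne']; ring
      _ ≤ A ^ s * ((A + B) ^ 2 * (Mρ + Mσ)) := by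
          apply mul_le_mul h2 ?_ (by positivity) (by positivity)
          nlinarith [mul_nonneg hMρ0 (mul_nonneg hA0.le hA0.le), mul_nonneg hMρ0 (mul_nonneg hA0.le hB0.le), mul_nonneg hMρ0 (mul_nonneg hB0.le hB0.le), mul_nonneg hMσ0 (mul_nonneg hA0.le hA0.le), mul_nonneg hMσ0 (mul_nonneg hA0.le hB0.le), mul_nonneg hMσ0 (mul_nonneg hB0.le hB0.le)]
      _ = (Mρ + Mσ) * (A ^ s * (A + B) ^ 2) := by ring
  · have h1 : B ^ (s + 1) ≤ A ^ (s + 1) := Real.rpow_le_rpow hB0.le h (by linarith)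
    have hAs : (0 : ℝ) < A ^ s := Real.rpow_pos_of_pos hA0 s
    calc B ^ (s + 1) * (Mρ * A + Mσ * B)
        ≤ A ^ (s + 1) * (Mρ * A + Mσ * B) := by
          apply mul_le_mul_of_nonneg_right h1 (by nlinarith)
      _ = A ^ s * (A * (Mρ * A + Mσ * B)) := by rw [Real.rpow_add_one hA0.ne']; ring
      _ ≤ A ^ s * ((A + B) ^ 2 * (Mρ + Mσ)) := by
          apply mul_le_mul_of_nonneg_left ?_ hAs.le
          nlinarith [mul_nonneg hMρ0 (mul_nonneg hA0.le hA0.le), mul_nonneg hMρ0 (mul_nonneg hA0.le hB0.le), mul_nonneg hMρ0 (mul_nonneg hB0.le hB0.le), mul_nonneg hMσ0 (mul_nonneg hA0.le hA0.le), mul_nonneg hMσ0 (mul_nonneg hA0.le hB0.le), mul_nonneg hMσ0 (mul_nonneg hB0.le hB0.le)]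
      _ = (Mρ + Mσ) * (A ^ s * (A + B) ^ 2) := by ring

private lemma wterm_eq {t p : ℝ} (hp : 0 ≤ p) {m : ℕ} (hm : 1 ≤ m) (z : ℂ) :
    (ENNReal.ofReal ((m : ℝ) ^ t) * ENNReal.ofReal ‖z‖) ^ p
      = ENNReal.ofReal ((m : ℝ) ^ (t * p) * ‖z‖ ^ p) := by
  have hm0 : (0 : ℝ) < m := by exact_mod_cast hm
  rw [← ENNReal.ofReal_mul (by positivity), ENNReal.ofReal_rpow_of_nonneg (by positivity) hp,
    Real.mul_rpow (by positivity) (norm_nonneg z), ← Real.rpow_mul hm0.le]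

private lemma wnorm_nonneg (t p : ℝ) (y : ℕ → ℂ) : 0 ≤ wnorm t p y :=
  Real.rpow_nonneg (tsum_nonneg fun m => by positivity) _

private lemma wnorm_zero_of_not_memw {t p : ℝ} (hp : 1 < p) {y : ℕ → ℂ}
    (h : ¬ MemW t p y) : wnorm t p y = 0 := by
  unfold wnorm
  rw [tsum_eq_zero_of_not_summable h, Real.zero_rpow (by positivity)]

private lemma ofReal_wnorm {t p : ℝ} (hp : 1 < p) {y : ℕ → ℂ} (h : MemW t p y) :
    ENNReal.ofReal (wnorm t p y)
      = (∑' m : {m : ℕ // 1 ≤ m}, ENNReal.ofReal ((m.1 : ℝ) ^ (t * p) * ‖y m.1‖ ^ p)) ^ (1 / p)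
    ∧ (∑' m : {m : ℕ // 1 ≤ m}, ENNReal.ofReal ((m.1 : ℝ) ^ (t * p) * ‖y m.1‖ ^ p)) ≠ ∞ := by
  have h1 : ∑' m : {m : ℕ // 1 ≤ m}, ENNReal.ofReal ((m.1 : ℝ) ^ (t * p) * ‖y m.1‖ ^ p)
      = ENNReal.ofReal (∑' m : {m : ℕ // 1 ≤ m}, (m.1 : ℝ) ^ (t * p) * ‖y m.1‖ ^ p) :=
    (ENNReal.ofReal_tsum_of_nonneg (fun m => by positivity) h).symm
  constructor
  · rw [h1, wnorm, ENNReal.ofReal_rpow_of_nonneg (tsum_nonneg fun m => by positivity)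
      (by positivity)]
  · rw [h1]; exact ENNReal.ofReal_ne_top

private lemma memw_of_fin {t p : ℝ} (hp : 1 < p) {y : ℕ → ℂ}
    (h : (∑' m : {m : ℕ // 1 ≤ m}, ENNReal.ofReal ((m.1 : ℝ) ^ (t * p) * ‖y m.1‖ ^ p)) ≠ ∞) :
    MemW t p y ∧ wnorm t p y
      = ((∑' m : {m : ℕ // 1 ≤ m}, ENNReal.ofReal ((m.1 : ℝ) ^ (t * p) * ‖y m.1‖ ^ p)) ^ (1 / p)).toReal := by
  have hmem : MemW t p y := by
    have := ENNReal.summable_toReal h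
    refine this.congr fun m => ?_
    rw [ENNReal.toReal_ofReal (by positivity)]
  refine ⟨hmem, ?_⟩
  have hts : (∑' m : {m : ℕ // 1 ≤ m}, (m.1 : ℝ) ^ (t * p) * ‖y m.1‖ ^ p)
      = (∑' m : {m : ℕ // 1 ≤ m}, ENNReal.ofReal ((m.1 : ℝ) ^ (t * p) * ‖y m.1‖ ^ p)).toReal := by
    rw [ENNReal.tsum_toReal_eq (fun a => ENNReal.ofReal_ne_top)]
    exact tsum_congr fun m => (ENNReal.toReal_ofReal (by positivity)).symm
  rw [wnorm, hts, ENNReal.toReal_rpow]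

private lemma abs_sq_sub_sq (m n : ℕ) (hm : 1 ≤ m) (hn : 1 ≤ n) :
    |(m : ℝ) ^ 2 - (n : ℝ) ^ 2| = |(m : ℝ) - n| * ((m : ℝ) + n) := by
  have h : (m : ℝ) ^ 2 - (n : ℝ) ^ 2 = ((m : ℝ) - n) * ((m : ℝ) + n) := by ring
  have hmn : (0 : ℝ) < (m : ℝ) + n := by
    have : (1 : ℝ) ≤ (m : ℝ) := by exact_mod_cast hm
    have : (1 : ℝ) ≤ (n : ℝ) := by exact_mod_cast hn
    linarith
  rw [h, abs_mul, abs_of_pos hmn]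

private lemma abs_sub_pos_nat {m n : ℕ} (hmn : m ≠ n) : 0 < |(m : ℝ) - n| := by
  have : ((m : ℝ) - n) ≠ 0 := sub_ne_zero.2 (by exact_mod_cast hmn)
  positivity

private lemma sum_fin_lemma {p q s : ℝ} (hp : 1 < p) (hpq : p.HolderConjugate q)
    (hs : -1 ≤ s) (hs' : s ≤ 0) {c : ℝ} (hc : 0 < c) {x : ℕ → ℂ} (hx : MemW s p x)
    {n : ℕ} (hn : 1 ≤ n) :
    Summable (fun m : {m : ℕ // 1 ≤ m ∧ m ≠ n} =>
      c * ‖x m.1‖ / |(m.1 : ℝ) ^ 2 - (n : ℝ) ^ 2|) := by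
  set F : {m : ℕ // 1 ≤ m ∧ m ≠ n} → ℝ≥0∞ :=
    fun m => ENNReal.ofReal ((m.1 : ℝ) ^ s * ‖x m.1‖) with hF
  set G : {m : ℕ // 1 ≤ m ∧ m ≠ n} → ℝ≥0∞ :=
    fun m => ENNReal.ofReal (c * (m.1 : ℝ) ^ (-s) / |(m.1 : ℝ) ^ 2 - (n : ℝ) ^ 2|) with hG
  have hm1 : ∀ m : {m : ℕ // 1 ≤ m ∧ m ≠ n}, (1 : ℝ) ≤ (m.1 : ℝ) := fun m => by
    exact_mod_cast m.2.1
  have hm0 : ∀ m : {m : ℕ // 1 ≤ m ∧ m ≠ n}, (0 : ℝ) < (m.1 : ℝ) := fun m =>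
    lt_of_lt_of_le one_pos (hm1 m)
  have hdr0 : ∀ m : {m : ℕ // 1 ≤ m ∧ m ≠ n}, 0 < |(m.1 : ℝ) ^ 2 - (n : ℝ) ^ 2| := by
    intro m
    rw [abs_sq_sub_sq m.1 n m.2.1 hn]
    have h1 := abs_sub_pos_nat m.2.2
    have h2 : (0 : ℝ) < (m.1 : ℝ) + n := by
      have := hm0 m
      have : (0:ℝ) < (n:ℝ) := by exact_mod_cast hn
      linarith [hm0 m]
    positivity
  have hprod : ∀ m : {m : ℕ // 1 ≤ m ∧ m ≠ n},
      ENNReal.ofReal (c * ‖x m.1‖ / |(m.1 : ℝ) ^ 2 - (n : ℝ) ^ 2|) = F m * G m := by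
    intro m
    rw [hF, hG]
    simp only
    rw [← ENNReal.ofReal_mul (by positivity)]
    congr 1
    rw [Real.rpow_neg (hm0 m).le]
    have hms : (0:ℝ) < (m.1 : ℝ) ^ s := Real.rpow_pos_of_pos (hm0 m) s
    field_simp
  have hfin : (∑' m : {m : ℕ // 1 ≤ m ∧ m ≠ n},
      ENNReal.ofReal (c * ‖x m.1‖ / |(m.1 : ℝ) ^ 2 - (n : ℝ) ^ 2|)) ≠ ∞ := by
    rw [tsum_congr hprod]
    have hhold := tsum_holder hpq F G
    apply ne_top_of_le_ne_top _ hhold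
    apply ENNReal.mul_ne_top
    · -- (∑ F^p)^(1/p) finite
      apply ENNReal.rpow_ne_top_of_nonneg hpq.one_div_nonneg
      have hFp : ∀ m : {m : ℕ // 1 ≤ m ∧ m ≠ n},
          F m ^ p = ENNReal.ofReal ((m.1 : ℝ) ^ (s * p) * ‖x m.1‖ ^ p) := by
        intro m
        rw [hF]
        simp only
        rw [ENNReal.ofReal_mul (by positivity), wterm_eq (by linarith) m.2.1]
      rw [tsum_congr hFp]
      apply ne_top_of_le_ne_top _
        (ENNReal.tsum_comp_le_tsum_of_injective
          (f := fun m : {m : ℕ // 1 ≤ m ∧ m ≠ n} => (⟨m.1, m.2.1⟩ : {m : ℕ // 1 ≤ m}))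
          (by intro a b hab; cases a; cases b; simpa using hab)
          (fun m : {m : ℕ // 1 ≤ m} => ENNReal.ofReal ((m.1 : ℝ) ^ (s * p) * ‖x m.1‖ ^ p)))
      rw [← ENNReal.ofReal_tsum_of_nonneg (fun m => by positivity) hx]
      exact ENNReal.ofReal_ne_top
    · -- (∑ G^q)^(1/q) finite
      apply ENNReal.rpow_ne_top_of_nonneg hpq.symm.one_div_nonneg
      have hGle : ∀ m : {m : ℕ // 1 ≤ m ∧ m ≠ n},
          G m ^ q ≤ ENNReal.ofReal (c ^ q) * ENNReal.ofReal ((1 / |(m.1 : ℝ) - n|) ^ q) := by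
        intro m
        have hle : c * (m.1 : ℝ) ^ (-s) / |(m.1 : ℝ) ^ 2 - (n : ℝ) ^ 2|
            ≤ c * (1 / |(m.1 : ℝ) - n|) := by
          have hpow : (m.1 : ℝ) ^ (-s) ≤ (m.1 : ℝ) := by
            have := Real.rpow_le_rpow_of_exponent_le (hm1 m) (by linarith : -s ≤ 1)
            rwa [Real.rpow_one] at this
          have hpow0 : (0:ℝ) < (m.1 : ℝ) ^ (-s) := Real.rpow_pos_of_pos (hm0 m) _
          have habs := abs_sub_pos_nat m.2.2
          have h2 : (0 : ℝ) < (m.1 : ℝ) + n := by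
            have : (0:ℝ) < (n:ℝ) := by exact_mod_cast hn
            linarith [hm0 m]
          have h3 : (0:ℝ) < |(m.1:ℝ) - n| * ((m.1:ℝ) + n) := by positivity
          rw [abs_sq_sub_sq m.1 n m.2.1 hn, mul_one_div,
            div_le_div_iff₀ h3 habs]
          have hnn : (1:ℝ) ≤ (n:ℝ) := by exact_mod_cast hn
          have e := mul_le_mul_of_nonneg_left (mul_le_mul_of_nonneg_right hpow habs.le) hc.le
          nlinarith [e, mul_nonneg (mul_nonneg hc.le habs.le) (le_trans zero_le_one hnn)]
        calc G m ^ q ≤ (ENNReal.ofReal (c * (1 / |(m.1 : ℝ) - n|))) ^ q := by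
              apply ENNReal.rpow_le_rpow (ENNReal.ofReal_le_ofReal hle) hpq.symm.nonneg
          _ = ENNReal.ofReal (c ^ q) * ENNReal.ofReal ((1 / |(m.1 : ℝ) - n|) ^ q) := by
              rw [ENNReal.ofReal_rpow_of_nonneg (by positivity) hpq.symm.nonneg,
                Real.mul_rpow hc.le (by positivity), ENNReal.ofReal_mul (by positivity)]
      apply ne_top_of_le_ne_top _ (Summable.tsum_le_tsum hGle ENNReal.summable ENNReal.summable)
      rw [ENNReal.tsum_mul_left]
      exact ENNReal.mul_ne_top ENNReal.ofReal_ne_top (rowsumq n hpq.symm.lt)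
  have := ENNReal.summable_toReal hfin
  refine this.congr fun m => ?_
  rw [ENNReal.toReal_ofReal (by positivity)]

private lemma key_pointwise {s : ℝ} (hs : -1 ≤ s) (hs' : s ≤ 0)
    {c : ℝ} (hc : 0 < c) {Mσ Mρ : ℝ}
    (ρm σn : ℂ) {m n : ℕ} (hm : 1 ≤ m) (hn : 1 ≤ n) (hmn : m ≠ n)
    (hd : c⁻¹ * |(m : ℝ) ^ 2 - (n : ℝ) ^ 2| ≤ ‖ρm - σn‖)
    (ht2 : ‖ρm - (m : ℂ) ^ 2 * (Real.pi : ℂ) ^ 2‖ ≤ Mρ * m)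
    (ht1 : ‖σn - (n : ℂ) ^ 2 * (Real.pi : ℂ) ^ 2‖ ≤ Mσ * n)
    (z : ℂ) :
    (n : ℝ) ^ (s + 1) * ‖z / (ρm - σn) - ((Real.pi : ℂ) ^ 2)⁻¹ * (z / ((m : ℂ) ^ 2 - (n : ℂ) ^ 2))‖
      ≤ (Real.pi ^ 2)⁻¹ * c * (Mρ + Mσ)
        * (1 / ((m : ℝ) - n) ^ 2 * ((m : ℝ) ^ s * ‖z‖)) := by
  have hπ := Real.pi_pos
  have hm1 : (1 : ℝ) ≤ (m : ℝ) := by exact_mod_cast hm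
  have hn1 : (1 : ℝ) ≤ (n : ℝ) := by exact_mod_cast hn
  have hm0 : (0 : ℝ) < m := lt_of_lt_of_le one_pos hm1
  have hn0 : (0 : ℝ) < n := lt_of_lt_of_le one_pos hn1
  have hMρ0 : 0 ≤ Mρ := by nlinarith [norm_nonneg (ρm - (m : ℂ) ^ 2 * (Real.pi : ℂ) ^ 2)]
  have hMσ0 : 0 ≤ Mσ := by nlinarith [norm_nonneg (σn - (n : ℂ) ^ 2 * (Real.pi : ℂ) ^ 2)]
  have habs := abs_sub_pos_nat hmn
  have hmn0 : (0 : ℝ) < (m : ℝ) + n := by linarith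
  have hdr0 : 0 < |(m : ℝ) ^ 2 - (n : ℝ) ^ 2| := by
    rw [abs_sq_sub_sq m n hm hn]; positivity
  have hπC : (Real.pi : ℂ) ≠ 0 := Complex.ofReal_ne_zero.mpr hπ.ne'
  have hDval : ((m : ℂ) ^ 2 - (n : ℂ) ^ 2) = (((m : ℝ) ^ 2 - (n : ℝ) ^ 2 : ℝ) : ℂ) := by
    push_cast; ring
  have hDnorm : ‖(m : ℂ) ^ 2 - (n : ℂ) ^ 2‖ = |(m : ℝ) ^ 2 - (n : ℝ) ^ 2| := by
    rw [hDval, Complex.norm_real, Real.norm_eq_abs]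
  have hD0 : ((m : ℂ) ^ 2 - (n : ℂ) ^ 2) ≠ 0 := by
    rw [← norm_ne_zero_iff, hDnorm]; exact hdr0.ne'
  have hdpos : 0 < ‖ρm - σn‖ := lt_of_lt_of_le (by positivity) hd
  have hd0 : ρm - σn ≠ 0 := by rw [← norm_ne_zero_iff]; exact hdpos.ne'
  have hπ2norm : ‖(Real.pi : ℂ) ^ 2‖ = Real.pi ^ 2 := by
    rw [norm_pow, Complex.norm_real, Real.norm_eq_abs, abs_of_pos hπ]
  have hiden : z / (ρm - σn) - ((Real.pi : ℂ) ^ 2)⁻¹ * (z / ((m : ℂ) ^ 2 - (n : ℂ) ^ 2))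
      = z * ((σn - (n : ℂ) ^ 2 * (Real.pi : ℂ) ^ 2) - (ρm - (m : ℂ) ^ 2 * (Real.pi : ℂ) ^ 2))
        * (((Real.pi : ℂ) ^ 2)⁻¹) / ((ρm - σn) * ((m : ℂ) ^ 2 - (n : ℂ) ^ 2)) := by
    field_simp
    ring
  rw [hiden]
  have hnorm_eq : ‖z * ((σn - (n : ℂ) ^ 2 * (Real.pi : ℂ) ^ 2)
        - (ρm - (m : ℂ) ^ 2 * (Real.pi : ℂ) ^ 2)) * (((Real.pi : ℂ) ^ 2)⁻¹)
        / ((ρm - σn) * ((m : ℂ) ^ 2 - (n : ℂ) ^ 2))‖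
      = ‖z‖ * ‖(σn - (n : ℂ) ^ 2 * (Real.pi : ℂ) ^ 2) - (ρm - (m : ℂ) ^ 2 * (Real.pi : ℂ) ^ 2)‖
        * (Real.pi ^ 2)⁻¹ / (‖ρm - σn‖ * |(m : ℝ) ^ 2 - (n : ℝ) ^ 2|) := by
    rw [norm_div, norm_mul, norm_mul, norm_mul, norm_inv, hπ2norm, hDnorm]
  rw [hnorm_eq]
  have hnum : ‖(σn - (n : ℂ) ^ 2 * (Real.pi : ℂ) ^ 2) - (ρm - (m : ℂ) ^ 2 * (Real.pi : ℂ) ^ 2)‖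
      ≤ Mρ * m + Mσ * n := by
    calc ‖(σn - (n : ℂ) ^ 2 * (Real.pi : ℂ) ^ 2) - (ρm - (m : ℂ) ^ 2 * (Real.pi : ℂ) ^ 2)‖
        ≤ ‖σn - (n : ℂ) ^ 2 * (Real.pi : ℂ) ^ 2‖ + ‖ρm - (m : ℂ) ^ 2 * (Real.pi : ℂ) ^ 2‖ :=
          norm_sub_le _ _
      _ ≤ Mρ * m + Mσ * n := by linarith
  have hB : ‖z‖ * ‖(σn - (n : ℂ) ^ 2 * (Real.pi : ℂ) ^ 2)
        - (ρm - (m : ℂ) ^ 2 * (Real.pi : ℂ) ^ 2)‖ * (Real.pi ^ 2)⁻¹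
        / (‖ρm - σn‖ * |(m : ℝ) ^ 2 - (n : ℝ) ^ 2|)
      ≤ ‖z‖ * (Mρ * m + Mσ * n) * (Real.pi ^ 2)⁻¹
        / ((c⁻¹ * |(m : ℝ) ^ 2 - (n : ℝ) ^ 2|) * |(m : ℝ) ^ 2 - (n : ℝ) ^ 2|) := by
    have hnum' : ‖z‖ * ‖(σn - (n : ℂ) ^ 2 * (Real.pi : ℂ) ^ 2)
        - (ρm - (m : ℂ) ^ 2 * (Real.pi : ℂ) ^ 2)‖ * (Real.pi ^ 2)⁻¹
        ≤ ‖z‖ * (Mρ * m + Mσ * n) * (Real.pi ^ 2)⁻¹ :=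
      mul_le_mul_of_nonneg_right (mul_le_mul_of_nonneg_left hnum (norm_nonneg z))
        (by positivity)
    have hnum0 : 0 ≤ ‖z‖ * (Mρ * m + Mσ * n) * (Real.pi ^ 2)⁻¹ := by
      have : 0 ≤ Mρ * m + Mσ * n :=
        add_nonneg (mul_nonneg hMρ0 hm0.le) (mul_nonneg hMσ0 hn0.le)
      positivity
    exact div_le_div₀ hnum0 hnum' (by positivity)
      (mul_le_mul_of_nonneg_right hd hdr0.le)
  refine le_trans (mul_le_mul_of_nonneg_left hB (by positivity : (0:ℝ) ≤ (n : ℝ) ^ (s + 1))) ?_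
  have hdd : (c⁻¹ * |(m : ℝ) ^ 2 - (n : ℝ) ^ 2|) * |(m : ℝ) ^ 2 - (n : ℝ) ^ 2|
      = c⁻¹ * (((m : ℝ) - n) ^ 2 * ((m : ℝ) + n) ^ 2) := by
    calc (c⁻¹ * |(m : ℝ) ^ 2 - (n : ℝ) ^ 2|) * |(m : ℝ) ^ 2 - (n : ℝ) ^ 2|
        = c⁻¹ * (|(m : ℝ) ^ 2 - (n : ℝ) ^ 2| * |(m : ℝ) ^ 2 - (n : ℝ) ^ 2|) := by ring
      _ = c⁻¹ * (((m : ℝ) ^ 2 - (n : ℝ) ^ 2) * ((m : ℝ) ^ 2 - (n : ℝ) ^ 2)) := by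
          rw [abs_mul_abs_self]
      _ = c⁻¹ * (((m : ℝ) - n) ^ 2 * ((m : ℝ) + n) ^ 2) := by ring
  rw [hdd]
  have hL : (n : ℝ) ^ (s + 1) * (‖z‖ * (Mρ * m + Mσ * n) * (Real.pi ^ 2)⁻¹
        / (c⁻¹ * (((m : ℝ) - n) ^ 2 * ((m : ℝ) + n) ^ 2)))
      = ((n : ℝ) ^ (s + 1) * (‖z‖ * (Mρ * m + Mσ * n) * (Real.pi ^ 2)⁻¹))
        / (c⁻¹ * (((m : ℝ) - n) ^ 2 * ((m : ℝ) + n) ^ 2)) := by ring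
  have hR : (Real.pi ^ 2)⁻¹ * c * (Mρ + Mσ) * (1 / ((m : ℝ) - n) ^ 2 * ((m : ℝ) ^ s * ‖z‖))
      = ((Real.pi ^ 2)⁻¹ * c * (Mρ + Mσ) * ((m : ℝ) ^ s * ‖z‖)) / ((m : ℝ) - n) ^ 2 := by
    ring
  have h6 : (0:ℝ) < ((m : ℝ) - n) ^ 2 := by rw [← sq_abs]; exact pow_pos habs 2
  rw [hL, hR, div_le_div_iff₀
    (mul_pos (inv_pos.2 hc) (mul_pos h6 (pow_pos hmn0 2))) h6]
  have base := ker_ineq hs hs' hm1 hn1 hMρ0 hMσ0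
  calc (n : ℝ) ^ (s + 1) * (‖z‖ * (Mρ * m + Mσ * n) * (Real.pi ^ 2)⁻¹) * ((m : ℝ) - n) ^ 2
      = ((Real.pi ^ 2)⁻¹ * ‖z‖ * ((m : ℝ) - n) ^ 2)
        * ((n : ℝ) ^ (s + 1) * (Mρ * (m : ℝ) + Mσ * n)) := by ring
    _ ≤ ((Real.pi ^ 2)⁻¹ * ‖z‖ * ((m : ℝ) - n) ^ 2)
        * ((Mρ + Mσ) * ((m : ℝ) ^ s * ((m : ℝ) + n) ^ 2)) :=
        mul_le_mul_of_nonneg_left base (by positivity)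
    _ = (Real.pi ^ 2)⁻¹ * c * (Mρ + Mσ) * ((m : ℝ) ^ s * ‖z‖)
        * (c⁻¹ * (((m : ℝ) - n) ^ 2 * ((m : ℝ) + n) ^ 2)) := by
        field_simp

private lemma tsum_rpow_mul_left {α : Type} {p : ℝ} (hp : 0 < p) (k : ℝ≥0∞) (f : α → ℝ≥0∞) :
    (∑' a, (k * f a) ^ p) ^ (1 / p) = k * (∑' a, (f a) ^ p) ^ (1 / p) := by
  have h1 : ∀ a, (k * f a) ^ p = k ^ p * (f a) ^ p := fun a =>
    ENNReal.mul_rpow_of_nonneg _ _ hp.le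
  rw [tsum_congr h1, ENNReal.tsum_mul_left,
    ENNReal.mul_rpow_of_nonneg _ _ (one_div_nonneg.2 hp.le), ← ENNReal.rpow_mul,
    mul_one_div, div_self hp.ne', ENNReal.rpow_one]

private lemma mink {α : Type} [Countable α] {p : ℝ} (hp : 1 ≤ p) (e F G : α → ℝ≥0∞)
    (h : ∀ a, e a ≤ F a + G a) :
    (∑' a, (e a) ^ p) ^ (1 / p) ≤ (∑' a, (F a) ^ p) ^ (1 / p) + (∑' a, (G a) ^ p) ^ (1 / p) := by
  refine le_trans ?_ (tsum_Lp_add hp F G)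
  apply ENNReal.rpow_le_rpow _ (one_div_nonneg.2 (by linarith))
  exact Summable.tsum_le_tsum (fun a => ENNReal.rpow_le_rpow (h a) (by linarith)) ENNReal.summable
    ENNReal.summable

private lemma normD (m n : ℕ) : ‖(m : ℂ) ^ 2 - (n : ℂ) ^ 2‖ = |(m : ℝ) ^ 2 - (n : ℝ) ^ 2| := by
  have hDval : ((m : ℂ) ^ 2 - (n : ℂ) ^ 2) = (((m : ℝ) ^ 2 - (n : ℝ) ^ 2 : ℝ) : ℂ) := by
    push_cast; ring
  rw [hDval, Complex.norm_real, Real.norm_eq_abs]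

private lemma normPi2 : ‖(Real.pi : ℂ) ^ 2‖ = Real.pi ^ 2 := by
  rw [norm_pow, Complex.norm_real, Real.norm_eq_abs, abs_of_pos Real.pi_pos]
theorem stmt5 (p s : ℝ) (hp : 1 < p) (hs : -1 ≤ s) (hs' : s ≤ 0)
    (σ ρ : ℕ → ℂ) (c : ℝ) (hc : 0 < c)
    (hsep : ∀ m n : ℕ, 1 ≤ m → 1 ≤ n → m ≠ n →
      c⁻¹ * |(m : ℝ) ^ 2 - (n : ℝ) ^ 2| ≤ ‖ρ m - σ n‖)
    (Mσ Mρ : ℝ)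
    (hMσ : ∀ m : ℕ, 1 ≤ m → (m : ℝ)⁻¹ * ‖σ m - (m : ℂ) ^ 2 * (Real.pi : ℂ) ^ 2‖ ≤ Mσ)
    (hMρ : ∀ m : ℕ, 1 ≤ m → (m : ℝ)⁻¹ * ‖ρ m - (m : ℂ) ^ 2 * (Real.pi : ℂ) ^ 2‖ ≤ Mρ)
    (K : ℝ) (hK : 0 ≤ K)
    (hA : ∀ x : ℕ → ℂ, MemW s p x → wnorm (s + 1) p (Aop x) ≤ K * wnorm s p x)
    (x : ℕ → ℂ) (hx : MemW s p x) :
    (∀ n : ℕ, 1 ≤ n →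
      Summable fun m : {m : ℕ // 1 ≤ m ∧ m ≠ n} => ‖x m.1 / (ρ m.1 - σ n)‖) ∧
    wnorm (s + 1) p (fun n => ∑' m : {m : ℕ // 1 ≤ m ∧ m ≠ n}, x m.1 / (ρ m.1 - σ n))
      ≤ (Real.pi ^ 2)⁻¹ * (K + 4 * c * Mρ + 4 * c * Mσ) * wnorm s p x := by
  have hπ := Real.pi_pos
  have hp0 : (0 : ℝ) < p := lt_trans one_pos hp
  have hpq := Real.HolderConjugate.conjExponent hp
  have hMρ0 : 0 ≤ Mρ := le_trans (by positivity) (hMρ 1 le_rfl)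
  have hMσ0 : 0 ≤ Mσ := le_trans (by positivity) (hMσ 1 le_rfl)
  have hπ2 : ((Real.pi : ℂ) ^ 2) ≠ 0 := pow_ne_zero _ (Complex.ofReal_ne_zero.2 hπ.ne')
  -- norms of ρ̃, σ̃
  have hρb : ∀ m : ℕ, 1 ≤ m → ‖ρ m - (m : ℂ) ^ 2 * (Real.pi : ℂ) ^ 2‖ ≤ Mρ * m := by
    intro m hm
    have hm0 : (0 : ℝ) < m := by exact_mod_cast hm
    have := mul_le_mul_of_nonneg_left (hMρ m hm) hm0.le
    rw [← mul_assoc, mul_inv_cancel₀ hm0.ne', one_mul] at this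
    linarith
  have hσb : ∀ m : ℕ, 1 ≤ m → ‖σ m - (m : ℂ) ^ 2 * (Real.pi : ℂ) ^ 2‖ ≤ Mσ * m := by
    intro m hm
    have hm0 : (0 : ℝ) < m := by exact_mod_cast hm
    have := mul_le_mul_of_nonneg_left (hMσ m hm) hm0.le
    rw [← mul_assoc, mul_inv_cancel₀ hm0.ne', one_mul] at this
    linarith
  -- summability of B-series
  have hsumB : ∀ n : ℕ, 1 ≤ n →
      Summable fun m : {m : ℕ // 1 ≤ m ∧ m ≠ n} => ‖x m.1 / (ρ m.1 - σ n)‖ := by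
    intro n hn
    have hS1 := sum_fin_lemma hp hpq hs hs' hc hx hn
    apply Summable.of_nonneg_of_le (fun m => norm_nonneg _) _ hS1
    intro m
    have hdr0 : 0 < |(m.1 : ℝ) ^ 2 - (n : ℝ) ^ 2| := by
      rw [abs_sq_sub_sq m.1 n m.2.1 hn]
      have h1 := abs_sub_pos_nat m.2.2
      have h2 : (0 : ℝ) < (m.1 : ℝ) + n := by
        have : (1:ℝ) ≤ (m.1:ℝ) := by exact_mod_cast m.2.1
        have : (1:ℝ) ≤ (n:ℝ) := by exact_mod_cast hn
        linarith
      positivity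
    have hsep' := hsep m.1 n m.2.1 hn m.2.2
    have hdpos : 0 < ‖ρ m.1 - σ n‖ := lt_of_lt_of_le (by positivity) hsep'
    rw [norm_div, div_le_div_iff₀ hdpos hdr0]
    have h7 : |(m.1 : ℝ) ^ 2 - (n : ℝ) ^ 2| ≤ c * ‖ρ m.1 - σ n‖ := by
      have := mul_le_mul_of_nonneg_left hsep' hc.le
      rwa [← mul_assoc, mul_inv_cancel₀ hc.ne', one_mul] at this
    nlinarith [mul_le_mul_of_nonneg_left h7 (norm_nonneg (x m.1))]
  -- summability of A-series
  have hsumA : ∀ n : ℕ, 1 ≤ n →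
      Summable fun m : {m : ℕ // 1 ≤ m ∧ m ≠ n} =>
        ‖x m.1 / ((m.1 : ℂ) ^ 2 - (n : ℂ) ^ 2)‖ := by
    intro n hn
    have hS1 := sum_fin_lemma hp hpq hs hs' hc hx hn
    apply Summable.of_nonneg_of_le (fun m => norm_nonneg _) _ (hS1.mul_left c⁻¹)
    intro m
    rw [norm_div, normD]
    apply le_of_eq
    have hdr0 : 0 < |(m.1 : ℝ) ^ 2 - (n : ℝ) ^ 2| := by
      rw [abs_sq_sub_sq m.1 n m.2.1 hn]
      have h1 := abs_sub_pos_nat m.2.2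
      have h2 : (0 : ℝ) < (m.1 : ℝ) + n := by
        have : (1:ℝ) ≤ (m.1:ℝ) := by exact_mod_cast m.2.1
        have : (1:ℝ) ≤ (n:ℝ) := by exact_mod_cast hn
        linarith
      positivity
    field_simp
  -- summability of remainder series
  have hsumR : ∀ n : ℕ, 1 ≤ n →
      Summable fun m : {m : ℕ // 1 ≤ m ∧ m ≠ n} =>
        ‖x m.1 / (ρ m.1 - σ n)
          - ((Real.pi : ℂ) ^ 2)⁻¹ * (x m.1 / ((m.1 : ℂ) ^ 2 - (n : ℂ) ^ 2))‖ := by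
    intro n hn
    apply Summable.of_nonneg_of_le (fun m => norm_nonneg _) _
      ((hsumB n hn).add ((hsumA n hn).mul_left ((Real.pi ^ 2)⁻¹)))
    intro m
    calc ‖x m.1 / (ρ m.1 - σ n)
          - ((Real.pi : ℂ) ^ 2)⁻¹ * (x m.1 / ((m.1 : ℂ) ^ 2 - (n : ℂ) ^ 2))‖
        ≤ ‖x m.1 / (ρ m.1 - σ n)‖
          + ‖((Real.pi : ℂ) ^ 2)⁻¹ * (x m.1 / ((m.1 : ℂ) ^ 2 - (n : ℂ) ^ 2))‖ := norm_sub_le _ _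
      _ = ‖x m.1 / (ρ m.1 - σ n)‖
          + (Real.pi ^ 2)⁻¹ * ‖x m.1 / ((m.1 : ℂ) ^ 2 - (n : ℂ) ^ 2)‖ := by
          rw [norm_mul, norm_inv, normPi2]
  refine ⟨hsumB, ?_⟩
  set Bf : ℕ → ℂ := fun n => ∑' m : {m : ℕ // 1 ≤ m ∧ m ≠ n}, x m.1 / (ρ m.1 - σ n) with hBfdef
  set Rf : ℕ → ℂ := fun n => ∑' m : {m : ℕ // 1 ≤ m ∧ m ≠ n},
    (x m.1 / (ρ m.1 - σ n) - ((Real.pi : ℂ) ^ 2)⁻¹ * (x m.1 / ((m.1 : ℂ) ^ 2 - (n : ℂ) ^ 2)))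
    with hRfdef
  -- splitting identity
  have hBsplit : ∀ n : ℕ, 1 ≤ n → Bf n = ((Real.pi : ℂ) ^ 2)⁻¹ * Aop x n + Rf n := by
    intro n hn
    have sA : Summable fun m : {m : ℕ // 1 ≤ m ∧ m ≠ n} =>
        ((Real.pi : ℂ) ^ 2)⁻¹ * (x m.1 / ((m.1 : ℂ) ^ 2 - (n : ℂ) ^ 2)) :=
      ((hsumA n hn).of_norm).mul_left _
    have sR : Summable fun m : {m : ℕ // 1 ≤ m ∧ m ≠ n} =>
        x m.1 / (ρ m.1 - σ n)
          - ((Real.pi : ℂ) ^ 2)⁻¹ * (x m.1 / ((m.1 : ℂ) ^ 2 - (n : ℂ) ^ 2)) :=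
      (hsumR n hn).of_norm
    have e1 : ∀ m : {m : ℕ // 1 ≤ m ∧ m ≠ n}, x m.1 / (ρ m.1 - σ n)
        = ((Real.pi : ℂ) ^ 2)⁻¹ * (x m.1 / ((m.1 : ℂ) ^ 2 - (n : ℂ) ^ 2))
          + (x m.1 / (ρ m.1 - σ n)
            - ((Real.pi : ℂ) ^ 2)⁻¹ * (x m.1 / ((m.1 : ℂ) ^ 2 - (n : ℂ) ^ 2))) :=
      fun m => by ring
    calc Bf n = ∑' m : {m : ℕ // 1 ≤ m ∧ m ≠ n},
          (((Real.pi : ℂ) ^ 2)⁻¹ * (x m.1 / ((m.1 : ℂ) ^ 2 - (n : ℂ) ^ 2))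
            + (x m.1 / (ρ m.1 - σ n)
              - ((Real.pi : ℂ) ^ 2)⁻¹ * (x m.1 / ((m.1 : ℂ) ^ 2 - (n : ℂ) ^ 2)))) :=
          tsum_congr e1
      _ = (∑' m : {m : ℕ // 1 ≤ m ∧ m ≠ n},
            ((Real.pi : ℂ) ^ 2)⁻¹ * (x m.1 / ((m.1 : ℂ) ^ 2 - (n : ℂ) ^ 2))) + Rf n :=
          Summable.tsum_add sA sR
      _ = ((Real.pi : ℂ) ^ 2)⁻¹ * Aop x n + Rf n := by rw [tsum_mul_left]; rfl
  have hBn : ∀ n : ℕ, 1 ≤ n →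
      ‖Bf n‖ ≤ (Real.pi ^ 2)⁻¹ * ‖Aop x n‖ + ‖Rf n‖ := by
    intro n hn
    rw [hBsplit n hn]
    refine le_trans (norm_add_le _ _) ?_
    rw [norm_mul, norm_inv, normPi2]
  have hAn : ∀ n : ℕ, 1 ≤ n →
      ‖Aop x n‖ ≤ Real.pi ^ 2 * (‖Bf n‖ + ‖Rf n‖) := by
    intro n hn
    have hid : Aop x n = (Real.pi : ℂ) ^ 2 * (Bf n - Rf n) := by
      rw [hBsplit n hn]
      field_simp
      ring
    rw [hid, norm_mul, normPi2]
    exact mul_le_mul_of_nonneg_left (norm_sub_le _ _) (by positivity)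
  -- ENNReal quantities
  set u : ℕ → ℝ≥0∞ := fun m => ENNReal.ofReal ((m : ℝ) ^ s * ‖x m‖) with hu
  set eB : {n : ℕ // 1 ≤ n} → ℝ≥0∞ :=
    fun n => ENNReal.ofReal ((n.1 : ℝ) ^ (s + 1)) * ENNReal.ofReal ‖Bf n.1‖ with heB
  set eA : {n : ℕ // 1 ≤ n} → ℝ≥0∞ :=
    fun n => ENNReal.ofReal ((n.1 : ℝ) ^ (s + 1)) * ENNReal.ofReal ‖Aop x n.1‖ with heA
  set eR : {n : ℕ // 1 ≤ n} → ℝ≥0∞ :=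
    fun n => ENNReal.ofReal ((n.1 : ℝ) ^ (s + 1)) * ENNReal.ofReal ‖Rf n.1‖ with heR
  obtain ⟨hwx, hXfin⟩ := ofReal_wnorm hp hx
  have hup : ∀ m : {m : ℕ // 1 ≤ m}, (u m.1) ^ p
      = ENNReal.ofReal ((m.1 : ℝ) ^ (s * p) * ‖x m.1‖ ^ p) := by
    intro m
    rw [hu]
    simp only
    rw [ENNReal.ofReal_mul (by positivity), wterm_eq hp0.le m.2]
  have hXp : (∑' m : {m : ℕ // 1 ≤ m}, (u m.1) ^ p) ^ (1 / p)
      = ENNReal.ofReal (wnorm s p x) := by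
    rw [tsum_congr hup, ← hwx]
  -- bound on E_R
  have hcst : (0 : ℝ) ≤ (Real.pi ^ 2)⁻¹ * c * (Mρ + Mσ) := by positivity
  have hERb : (∑' n : {n : ℕ // 1 ≤ n}, (eR n) ^ p) ^ (1 / p)
      ≤ ENNReal.ofReal ((Real.pi ^ 2)⁻¹ * c * (Mρ + Mσ))
        * (4 * ENNReal.ofReal (wnorm s p x)) := by
    have h1 : ∀ n : {n : ℕ // 1 ≤ n},
        eR n ≤ ENNReal.ofReal ((Real.pi ^ 2)⁻¹ * c * (Mρ + Mσ))
          * (∑' m : {m : ℕ // 1 ≤ m ∧ m ≠ n.1},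
              ENNReal.ofReal (1 / ((m.1 : ℝ) - n.1) ^ 2) * u m.1) := by
      intro n
      have hkey : ∀ m : {m : ℕ // 1 ≤ m ∧ m ≠ n.1},
          ENNReal.ofReal ((n.1 : ℝ) ^ (s + 1)) * ENNReal.ofReal
            ‖x m.1 / (ρ m.1 - σ n.1)
              - ((Real.pi : ℂ) ^ 2)⁻¹ * (x m.1 / ((m.1 : ℂ) ^ 2 - (n.1 : ℂ) ^ 2))‖
          ≤ ENNReal.ofReal ((Real.pi ^ 2)⁻¹ * c * (Mρ + Mσ))
            * (ENNReal.ofReal (1 / ((m.1 : ℝ) - n.1) ^ 2) * u m.1) := by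
        intro m
        rw [← ENNReal.ofReal_mul (by positivity), hu]
        simp only
        rw [← ENNReal.ofReal_mul (by positivity), ← ENNReal.ofReal_mul hcst]
        apply ENNReal.ofReal_le_ofReal
        exact key_pointwise hs hs' hc (ρ m.1) (σ n.1) m.2.1 n.2 m.2.2
          (hsep m.1 n.1 m.2.1 n.2 m.2.2) (hρb m.1 m.2.1) (hσb n.1 n.2) (x m.1)
      calc eR n = ENNReal.ofReal ((n.1 : ℝ) ^ (s + 1)) * ENNReal.ofReal ‖Rf n.1‖ := rfl
        _ ≤ ENNReal.ofReal ((n.1 : ℝ) ^ (s + 1)) * ENNReal.ofReal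
              (∑' m : {m : ℕ // 1 ≤ m ∧ m ≠ n.1},
                ‖x m.1 / (ρ m.1 - σ n.1)
                  - ((Real.pi : ℂ) ^ 2)⁻¹ * (x m.1 / ((m.1 : ℂ) ^ 2 - (n.1 : ℂ) ^ 2))‖) := by
            apply mul_le_mul_right
            apply ENNReal.ofReal_le_ofReal
            exact norm_tsum_le_tsum_norm (hsumR n.1 n.2)
        _ = ENNReal.ofReal ((n.1 : ℝ) ^ (s + 1)) * ∑' m : {m : ℕ // 1 ≤ m ∧ m ≠ n.1},
              ENNReal.ofReal ‖x m.1 / (ρ m.1 - σ n.1)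
                - ((Real.pi : ℂ) ^ 2)⁻¹ * (x m.1 / ((m.1 : ℂ) ^ 2 - (n.1 : ℂ) ^ 2))‖ := by
            rw [ENNReal.ofReal_tsum_of_nonneg (fun m => norm_nonneg _) (hsumR n.1 n.2)]
        _ = ∑' m : {m : ℕ // 1 ≤ m ∧ m ≠ n.1},
              ENNReal.ofReal ((n.1 : ℝ) ^ (s + 1)) * ENNReal.ofReal
                ‖x m.1 / (ρ m.1 - σ n.1)
                  - ((Real.pi : ℂ) ^ 2)⁻¹ * (x m.1 / ((m.1 : ℂ) ^ 2 - (n.1 : ℂ) ^ 2))‖ :=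
            ENNReal.tsum_mul_left.symm
        _ ≤ ∑' m : {m : ℕ // 1 ≤ m ∧ m ≠ n.1},
              ENNReal.ofReal ((Real.pi ^ 2)⁻¹ * c * (Mρ + Mσ))
                * (ENNReal.ofReal (1 / ((m.1 : ℝ) - n.1) ^ 2) * u m.1) :=
            Summable.tsum_le_tsum hkey ENNReal.summable ENNReal.summable
        _ = ENNReal.ofReal ((Real.pi ^ 2)⁻¹ * c * (Mρ + Mσ))
              * (∑' m : {m : ℕ // 1 ≤ m ∧ m ≠ n.1},
                ENNReal.ofReal (1 / ((m.1 : ℝ) - n.1) ^ 2) * u m.1) :=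
            ENNReal.tsum_mul_left
    calc (∑' n : {n : ℕ // 1 ≤ n}, (eR n) ^ p) ^ (1 / p)
        ≤ (∑' n : {n : ℕ // 1 ≤ n}, (ENNReal.ofReal ((Real.pi ^ 2)⁻¹ * c * (Mρ + Mσ))
            * (∑' m : {m : ℕ // 1 ≤ m ∧ m ≠ n.1},
              ENNReal.ofReal (1 / ((m.1 : ℝ) - n.1) ^ 2) * u m.1)) ^ p) ^ (1 / p) := by
          apply ENNReal.rpow_le_rpow _ (one_div_nonneg.2 hp0.le)
          exact Summable.tsum_le_tsum (fun n => ENNReal.rpow_le_rpow (h1 n) hp0.le)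
            ENNReal.summable ENNReal.summable
      _ = ENNReal.ofReal ((Real.pi ^ 2)⁻¹ * c * (Mρ + Mσ))
            * (∑' n : {n : ℕ // 1 ≤ n}, (∑' m : {m : ℕ // 1 ≤ m ∧ m ≠ n.1},
              ENNReal.ofReal (1 / ((m.1 : ℝ) - n.1) ^ 2) * u m.1) ^ p) ^ (1 / p) :=
          tsum_rpow_mul_left hp0 _ _
      _ ≤ ENNReal.ofReal ((Real.pi ^ 2)⁻¹ * c * (Mρ + Mσ))
            * (4 * (∑' m : {m : ℕ // 1 ≤ m}, (u m.1) ^ p) ^ (1 / p)) :=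
          mul_le_mul_right (schur hpq u) _
      _ = ENNReal.ofReal ((Real.pi ^ 2)⁻¹ * c * (Mρ + Mσ))
            * (4 * ENNReal.ofReal (wnorm s p x)) := by rw [hXp]
  have hERfin : (∑' n : {n : ℕ // 1 ≤ n}, (eR n) ^ p) ^ (1 / p) ≠ ∞ :=
    ne_top_of_le_ne_top (ENNReal.mul_ne_top ENNReal.ofReal_ne_top
      (ENNReal.mul_ne_top (by norm_num) ENNReal.ofReal_ne_top)) hERb
  -- main case split
  by_cases hmem : MemW (s + 1) p Bf
  case neg =>
    rw [wnorm_zero_of_not_memw hp hmem]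
    have h1 : (0:ℝ) ≤ 4 * c * Mρ := by positivity
    have h2 : (0:ℝ) ≤ 4 * c * Mσ := by positivity
    have h3 := wnorm_nonneg s p x
    have h4 : (0:ℝ) ≤ (Real.pi ^ 2)⁻¹ := by positivity
    apply mul_nonneg (mul_nonneg h4 (by linarith)) h3
  case pos =>
  obtain ⟨hwB, hSBfin⟩ := ofReal_wnorm hp hmem
  have heBp : ∀ n : {n : ℕ // 1 ≤ n}, (eB n) ^ p
      = ENNReal.ofReal ((n.1 : ℝ) ^ ((s + 1) * p) * ‖Bf n.1‖ ^ p) :=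
    fun n => wterm_eq hp0.le n.2 (Bf n.1)
  have heAp : ∀ n : {n : ℕ // 1 ≤ n}, (eA n) ^ p
      = ENNReal.ofReal ((n.1 : ℝ) ^ ((s + 1) * p) * ‖Aop x n.1‖ ^ p) :=
    fun n => wterm_eq hp0.le n.2 (Aop x n.1)
  -- Minkowski for B
  have hpointB : ∀ n : {n : ℕ // 1 ≤ n},
      eB n ≤ (ENNReal.ofReal ((Real.pi ^ 2)⁻¹) * eA n) + eR n := by
    intro n
    rw [heB, heA, heR]
    simp only
    calc ENNReal.ofReal ((n.1 : ℝ) ^ (s + 1)) * ENNReal.ofReal ‖Bf n.1‖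
        ≤ ENNReal.ofReal ((n.1 : ℝ) ^ (s + 1))
          * ENNReal.ofReal ((Real.pi ^ 2)⁻¹ * ‖Aop x n.1‖ + ‖Rf n.1‖) :=
          mul_le_mul_right (ENNReal.ofReal_le_ofReal (hBn n.1 n.2)) _
      _ = (ENNReal.ofReal ((Real.pi ^ 2)⁻¹)
            * (ENNReal.ofReal ((n.1 : ℝ) ^ (s + 1)) * ENNReal.ofReal ‖Aop x n.1‖))
          + ENNReal.ofReal ((n.1 : ℝ) ^ (s + 1)) * ENNReal.ofReal ‖Rf n.1‖ := by
          rw [ENNReal.ofReal_add (by positivity) (norm_nonneg _),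
            ENNReal.ofReal_mul (by positivity), mul_add]
          ring
  have hEB_le : (∑' n : {n : ℕ // 1 ≤ n},
        ENNReal.ofReal ((n.1 : ℝ) ^ ((s + 1) * p) * ‖Bf n.1‖ ^ p)) ^ (1 / p)
      ≤ ENNReal.ofReal ((Real.pi ^ 2)⁻¹)
          * (∑' n : {n : ℕ // 1 ≤ n}, (eA n) ^ p) ^ (1 / p)
        + (∑' n : {n : ℕ // 1 ≤ n}, (eR n) ^ p) ^ (1 / p) := by
    rw [← tsum_congr heBp]
    refine le_trans (mink hp.le eB (fun n => ENNReal.ofReal ((Real.pi ^ 2)⁻¹) * eA n) eR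
      hpointB) ?_
    rw [tsum_rpow_mul_left hp0]
  -- finiteness of A-norm
  have hpointA : ∀ n : {n : ℕ // 1 ≤ n},
      eA n ≤ (ENNReal.ofReal (Real.pi ^ 2) * eB n) + ENNReal.ofReal (Real.pi ^ 2) * eR n := by
    intro n
    rw [heB, heA, heR]
    simp only
    calc ENNReal.ofReal ((n.1 : ℝ) ^ (s + 1)) * ENNReal.ofReal ‖Aop x n.1‖
        ≤ ENNReal.ofReal ((n.1 : ℝ) ^ (s + 1))
          * ENNReal.ofReal (Real.pi ^ 2 * (‖Bf n.1‖ + ‖Rf n.1‖)) :=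
          mul_le_mul_right (ENNReal.ofReal_le_ofReal (hAn n.1 n.2)) _
      _ = ENNReal.ofReal (Real.pi ^ 2)
            * (ENNReal.ofReal ((n.1 : ℝ) ^ (s + 1)) * ENNReal.ofReal ‖Bf n.1‖)
          + ENNReal.ofReal (Real.pi ^ 2)
            * (ENNReal.ofReal ((n.1 : ℝ) ^ (s + 1)) * ENNReal.ofReal ‖Rf n.1‖) := by
          rw [ENNReal.ofReal_mul (by positivity),
            ENNReal.ofReal_add (norm_nonneg _) (norm_nonneg _), mul_add]
          ring
  have hEAfin : (∑' n : {n : ℕ // 1 ≤ n}, (eA n) ^ p) ^ (1 / p) ≠ ∞ := by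
    apply ne_top_of_le_ne_top _
      (le_trans (mink hp.le eA (fun n => ENNReal.ofReal (Real.pi ^ 2) * eB n)
        (fun n => ENNReal.ofReal (Real.pi ^ 2) * eR n) hpointA)
        (le_of_eq (by rw [tsum_rpow_mul_left hp0, tsum_rpow_mul_left hp0])))
    apply ENNReal.add_ne_top.2
    constructor
    · apply ENNReal.mul_ne_top ENNReal.ofReal_ne_top
      have : (∑' n : {n : ℕ // 1 ≤ n}, (eB n) ^ p) ^ (1 / p)
          = (∑' n : {n : ℕ // 1 ≤ n},
            ENNReal.ofReal ((n.1 : ℝ) ^ ((s + 1) * p) * ‖Bf n.1‖ ^ p)) ^ (1 / p) := by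
        rw [tsum_congr heBp]
      rw [this]
      exact ENNReal.rpow_ne_top_of_nonneg (one_div_nonneg.2 hp0.le) hSBfin
    · exact ENNReal.mul_ne_top ENNReal.ofReal_ne_top hERfin
  have hSAfin : (∑' n : {n : ℕ // 1 ≤ n},
      ENNReal.ofReal ((n.1 : ℝ) ^ ((s + 1) * p) * ‖Aop x n.1‖ ^ p)) ≠ ∞ := by
    intro hcon
    apply hEAfin
    rw [tsum_congr heAp, hcon, ENNReal.top_rpow_of_pos (by positivity)]
  obtain ⟨hmemA, hwAeq⟩ := memw_of_fin hp hSAfin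
  have hEAeq : (∑' n : {n : ℕ // 1 ≤ n}, (eA n) ^ p) ^ (1 / p)
      = ENNReal.ofReal (wnorm (s + 1) p (Aop x)) := by
    rw [hwAeq, ENNReal.ofReal_toReal
      (ENNReal.rpow_ne_top_of_nonneg (one_div_nonneg.2 hp0.le) hSAfin), tsum_congr heAp]
  have hAle : (∑' n : {n : ℕ // 1 ≤ n}, (eA n) ^ p) ^ (1 / p)
      ≤ ENNReal.ofReal (K * wnorm s p x) := by
    rw [hEAeq]
    exact ENNReal.ofReal_le_ofReal (hA x hx)
  -- final assembly
  have final : ENNReal.ofReal (wnorm (s + 1) p Bf)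
      ≤ ENNReal.ofReal ((Real.pi ^ 2)⁻¹ * (K + 4 * c * Mρ + 4 * c * Mσ) * wnorm s p x) := by
    rw [hwB]
    calc (∑' n : {n : ℕ // 1 ≤ n},
          ENNReal.ofReal ((n.1 : ℝ) ^ ((s + 1) * p) * ‖Bf n.1‖ ^ p)) ^ (1 / p)
        ≤ ENNReal.ofReal ((Real.pi ^ 2)⁻¹)
            * (∑' n : {n : ℕ // 1 ≤ n}, (eA n) ^ p) ^ (1 / p)
          + (∑' n : {n : ℕ // 1 ≤ n}, (eR n) ^ p) ^ (1 / p) := hEB_le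
      _ ≤ ENNReal.ofReal ((Real.pi ^ 2)⁻¹) * ENNReal.ofReal (K * wnorm s p x)
          + ENNReal.ofReal ((Real.pi ^ 2)⁻¹ * c * (Mρ + Mσ))
            * (4 * ENNReal.ofReal (wnorm s p x)) :=
          add_le_add (mul_le_mul_right hAle _) hERb
      _ = ENNReal.ofReal ((Real.pi ^ 2)⁻¹ * (K + 4 * c * Mρ + 4 * c * Mσ) * wnorm s p x) := by
          have h3 := wnorm_nonneg s p x
          rw [← ENNReal.ofReal_mul (by positivity),
            show (4 : ℝ≥0∞) = ENNReal.ofReal (4 : ℝ) by norm_num,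
            ← ENNReal.ofReal_mul (by norm_num),
            ← ENNReal.ofReal_mul hcst,
            ← ENNReal.ofReal_add (by positivity) (by positivity)]
          congr 1
          ring
  have hrhs0 : 0 ≤ (Real.pi ^ 2)⁻¹ * (K + 4 * c * Mρ + 4 * c * Mσ) * wnorm s p x := by
    have h1 : (0:ℝ) ≤ 4 * c * Mρ := by positivity
    have h2 : (0:ℝ) ≤ 4 * c * Mσ := by positivity
    have h3 := wnorm_nonneg s p x
    have h4 : (0:ℝ) ≤ (Real.pi ^ 2)⁻¹ := by positivity
    apply mul_nonneg (mul_nonneg h4 (by linarith)) h3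
  exact (ENNReal.ofReal_le_ofReal_iff hrhs0).1 final
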